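/- Let 𝔍_s = {U ∈ U(2) : det(I − U) = 0 and det(I + U) = 0} (equivalently, the unitary matrices with one eigenvalue +1 and one eigenvalue −1). Then for every U ∈ 𝔍_s the matrix I − iU is invertible, iU lies in the range of ψ, and the map U ↦ ψ⁻¹(iU) is a bijection from 𝔍_s onto the 2-sphere {x ∈ M : x⁰ = 0 and (x¹)² + (x²)² + (x³)² = 1}. -/

import Mathlib

noncomputable section

open Matrix Complex

abbrev Mat2 := Matrix (Fin 2) (Fin 2) ℂ

/-- Minkowski quadratic form on ℝ⁴. -/
def mq (x : Fin 4 → ℝ) : ℝ := -(x 0)^2 + (x 1)^2 + (x 2)^2 + (x 3)^2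

/-- The isomorphism of Minkowski space with Hermitian 2×2 matrices. -/
def mphi (x : Fin 4 → ℝ) : Mat2 :=
  !![(x 0 : ℂ) + (x 3 : ℂ), (x 1 : ℂ) - Complex.I * (x 2 : ℂ);
     (x 1 : ℂ) + Complex.I * (x 2 : ℂ), (x 0 : ℂ) - (x 3 : ℂ)]

/-- The Cayley transform. -/
def cayley (X : Mat2) : Mat2 := (X - Complex.I • 1) * (X + Complex.I • 1)⁻¹

/-- ψ = u ∘ φ : M → U(2). -/
def mpsi (x : Fin 4 → ℝ) : Mat2 := cayley (mphi x)

/-- The set 𝔍ₛ of unitary matrices with eigenvalues +1 and −1. -/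
def Js : Set Mat2 :=
  {U : Mat2 | U ∈ Matrix.unitaryGroup (Fin 2) ℂ ∧ (1 - U).det = 0 ∧ (1 + U).det = 0}

/-- The candidate inverse map. -/
def ginv (U : Mat2) : Fin 4 → ℝ := ![0, -(U 1 0).re, -(U 1 0).im, -(U 0 0).re]

/-- Structure of elements of 𝔍ₛ, explicit-entry version. -/
lemma js_struct_aux (a b c d : ℂ)
    (hdet1 : (1 - a) * (1 - d) - (-b) * (-c) = 0)
    (hdet2 : (1 + a) * (1 + d) - b * c = 0)
    (hu : star (!![a, b; c, d]) * !![a, b; c, d] = 1) :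
    ∃ aR x y : ℝ, aR ^ 2 + x ^ 2 + y ^ 2 = 1 ∧
      !![a, b; c, d] = !![(aR : ℂ), (x : ℂ) - Complex.I * y; (x : ℂ) + Complex.I * y, -(aR : ℂ)] := by
  have htr : d = -a := by linear_combination (hdet2 - hdet1) / 2
  have hbc : a * a + b * c = 1 := by
    rw [htr] at hdet1; linear_combination -hdet1
  have hU2 : !![a, b; c, d] * !![a, b; c, d] = 1 := by
    ext i j
    fin_cases i <;> fin_cases j <;>
      simp [Matrix.mul_apply, Fin.sum_univ_two, Matrix.one_apply, htr] <;>
      first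
        | ring1
        | linear_combination hbc
        | linear_combination -hbc
        | linear_combination 2 * hbc
        | linear_combination -2 * hbc
  have hstar : star (!![a, b; c, d]) = !![a, b; c, d] := by
    calc star (!![a, b; c, d]) = star (!![a, b; c, d]) * (!![a, b; c, d] * !![a, b; c, d]) := by
          rw [hU2, mul_one]
    _ = (star (!![a, b; c, d]) * !![a, b; c, d]) * !![a, b; c, d] := by rw [mul_assoc]
    _ = !![a, b; c, d] := by rw [hu, one_mul]
  have hba : b = starRingEnd ℂ c := by
    have := congrFun (congrFun hstar 0) 1
    simpa [Matrix.star_apply] using this.symm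
  have haa : starRingEnd ℂ a = a := by
    have := congrFun (congrFun hstar 0) 0
    simpa [Matrix.star_apply] using this
  have haR : a = ((a.re : ℝ) : ℂ) := (Complex.conj_eq_iff_re.mp haa).symm
  refine ⟨a.re, c.re, c.im, ?_, ?_⟩
  · rw [hba, haR, mul_comm (starRingEnd ℂ c) c, Complex.mul_conj] at hbc
    have hr : a.re * a.re + Complex.normSq c = 1 := by exact_mod_cast hbc
    rw [Complex.normSq_apply] at hr
    linear_combination hr
  · have hc1 : c = (c.re : ℂ) + Complex.I * c.im := by
      apply Complex.ext <;> simp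
    have hc2 : b = (c.re : ℂ) - Complex.I * c.im := by
      rw [hba]; apply Complex.ext <;> simp
    ext i j
    fin_cases i <;> fin_cases j
    · simpa using haR
    · simpa using hc2
    · simpa using hc1
    · simpa [htr] using congrArg Neg.neg haR

/-- Structure of elements of 𝔍ₛ. -/
lemma js_struct (U : Mat2) (hU : U ∈ Js) :
    ∃ a x y : ℝ, a ^ 2 + x ^ 2 + y ^ 2 = 1 ∧
      U = !![(a : ℂ), (x : ℂ) - Complex.I * y; (x : ℂ) + Complex.I * y, -(a : ℂ)] := by
  obtain ⟨hu, h1, h2⟩ := hU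
  have hu' := Matrix.mem_unitaryGroup_iff'.mp hu
  rw [Matrix.eta_fin_two U] at h1 h2 hu'
  have hdet1 : (1 - U 0 0) * (1 - U 1 1) - (-(U 0 1)) * (-(U 1 0)) = 0 := by
    rw [Matrix.det_fin_two] at h1
    simpa [Matrix.sub_apply, Matrix.one_apply] using h1
  have hdet2 : (1 + U 0 0) * (1 + U 1 1) - U 0 1 * U 1 0 = 0 := by
    rw [Matrix.det_fin_two] at h2
    simpa [Matrix.add_apply, Matrix.one_apply] using h2
  obtain ⟨aR, x, y, h, heq⟩ := js_struct_aux (U 0 0) (U 0 1) (U 1 0) (U 1 1) hdet1 hdet2 hu'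
  exact ⟨aR, x, y, h, by rw [Matrix.eta_fin_two U]; exact heq⟩

/-- The key computation: ψ(0,−x,−y,−a) = i·U for the corresponding U. -/
lemma psi_key (a x y : ℝ) (h : a ^ 2 + x ^ 2 + y ^ 2 = 1) :
    mpsi ![0, -x, -y, -a] =
      Complex.I • !![(a : ℂ), (x : ℂ) - Complex.I * y; (x : ℂ) + Complex.I * y, -(a : ℂ)] := by
  have hC : ((a : ℂ)) ^ 2 + (x : ℂ) ^ 2 + (y : ℂ) ^ 2 = 1 := by exact_mod_cast congrArg (Complex.ofReal) h
  set X := mphi ![0, -x, -y, -a] with hX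
  have hXval : X = !![(-a : ℂ), -(x : ℂ) + Complex.I * y; -(x : ℂ) - Complex.I * y, (a : ℂ)] := by
    rw [hX, mphi]
    norm_num
    constructor <;> simp [Matrix.cons_val_two, Matrix.cons_val_three, Matrix.vecHead, Matrix.vecTail] <;> ring
  have hinv : (X + Complex.I • 1)⁻¹ = (2 : ℂ)⁻¹ • (X - Complex.I • 1) := by
    apply Matrix.inv_eq_right_inv
    rw [hXval]
    ext i j
    fin_cases i <;> fin_cases j <;>
      simp [Matrix.mul_apply, Fin.sum_univ_two, Matrix.one_apply, Matrix.smul_apply,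
        Matrix.add_apply, Matrix.sub_apply] <;>
      (try field_simp) <;> (try ring_nf) <;>
      (try simp only [Complex.I_sq, Complex.I_mul_I, Complex.I_pow_four]) <;> (try ring_nf) <;>
      first
        | ring1
        | linear_combination hC
        | linear_combination -hC
        | linear_combination 2 * hC
        | linear_combination -2 * hC
        | linear_combination Complex.I * hC
        | linear_combination -Complex.I * hC
        | linear_combination 2 * Complex.I * hC
        | linear_combination -2 * Complex.I * hC
  rw [mpsi, cayley, ← hX, hinv, hXval]
  ext i j
  fin_cases i <;> fin_cases j <;>
    simp [Matrix.mul_apply, Fin.sum_univ_two, Matrix.one_apply, Matrix.smul_apply,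
      Matrix.sub_apply] <;>
    (try field_simp) <;> (try ring_nf) <;>
      (try simp only [Complex.I_sq, Complex.I_mul_I, Complex.I_pow_four]) <;> (try ring_nf) <;>
      first
        | ring1
        | linear_combination hC
        | linear_combination -hC
        | linear_combination 2 * hC
        | linear_combination -2 * hC
        | linear_combination Complex.I * hC
        | linear_combination -Complex.I * hC
        | linear_combination 2 * Complex.I * hC
        | linear_combination -2 * Complex.I * hC

theorem stmt3 :
    (∀ U ∈ Js, IsUnit (1 - Complex.I • U) ∧ Complex.I • U ∈ Set.range mpsi) ∧
    (∃ g : Mat2 → (Fin 4 → ℝ),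
      (∀ U ∈ Js, mpsi (g U) = Complex.I • U) ∧
      Set.BijOn g Js {x : Fin 4 → ℝ | x 0 = 0 ∧ (x 1)^2 + (x 2)^2 + (x 3)^2 = 1}) := by
  have hgU : ∀ U ∈ Js, ∃ a x y : ℝ, a ^ 2 + x ^ 2 + y ^ 2 = 1 ∧
      U = !![(a : ℂ), (x : ℂ) - Complex.I * y; (x : ℂ) + Complex.I * y, -(a : ℂ)] ∧
      ginv U = ![0, -x, -y, -a] := by
    intro U hU
    obtain ⟨a, x, y, h, hUeq⟩ := js_struct U hU
    refine ⟨a, x, y, h, hUeq, ?_⟩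
    funext i
    fin_cases i <;> simp [ginv, hUeq]
  constructor
  · intro U hU
    obtain ⟨a, x, y, h, hUeq, -⟩ := hgU U hU
    constructor
    · rw [Matrix.isUnit_iff_isUnit_det]
      have hC : ((a : ℂ)) ^ 2 + (x : ℂ) ^ 2 + (y : ℂ) ^ 2 = 1 := by
        exact_mod_cast congrArg (Complex.ofReal) h
      have hdet : (1 - Complex.I • U).det = 2 := by
        rw [hUeq, Matrix.det_fin_two]
        simp [Matrix.sub_apply, Matrix.one_apply, Matrix.smul_apply]
        (try field_simp) <;> (try ring_nf) <;>
      (try simp only [Complex.I_sq, Complex.I_mul_I, Complex.I_pow_four]) <;> (try ring_nf) <;>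
      first
        | ring1
        | linear_combination hC
        | linear_combination -hC
        | linear_combination 2 * hC
        | linear_combination -2 * hC
        | linear_combination Complex.I * hC
        | linear_combination -Complex.I * hC
        | linear_combination 2 * Complex.I * hC
        | linear_combination -2 * Complex.I * hC
      rw [hdet]
      exact isUnit_iff_ne_zero.mpr two_ne_zero
    · exact ⟨![0, -x, -y, -a], by rw [psi_key a x y h, hUeq]⟩
  · refine ⟨ginv, ?_, ?_, ?_, ?_⟩
    · intro U hU
      obtain ⟨a, x, y, h, hUeq, hg⟩ := hgU U hU
      rw [hg, psi_key a x y h, hUeq]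
    · intro U hU
      obtain ⟨a, x, y, h, hUeq, hg⟩ := hgU U hU
      rw [hg]
      constructor <;> simp
      linarith [h]
    · intro U hU V hV hUV
      obtain ⟨a, x, y, h, hUeq, hg⟩ := hgU U hU
      obtain ⟨a', x', y', h', hVeq, hg'⟩ := hgU V hV
      rw [hg, hg'] at hUV
      have h1 : -x = -x' := congrFun hUV 1
      have h2 : -y = -y' := congrFun hUV 2
      have h3 : -a = -a' := congrFun hUV 3
      have hx : x = x' := by linarith
      have hy : y = y' := by linarith
      have ha : a = a' := by linarith
      rw [hUeq, hVeq, hx, hy, ha]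
    · rintro p ⟨hp0, hp1⟩
      set a : ℝ := -p 3 with ha
      set x : ℝ := -p 1 with hx
      set y : ℝ := -p 2 with hy
      have h : a ^ 2 + x ^ 2 + y ^ 2 = 1 := by rw [ha, hx, hy]; nlinarith [hp1]
      have hC : ((a : ℂ)) ^ 2 + (x : ℂ) ^ 2 + (y : ℂ) ^ 2 = 1 := by
        exact_mod_cast congrArg (Complex.ofReal) h
      set U : Mat2 := !![(a : ℂ), (x : ℂ) - Complex.I * y; (x : ℂ) + Complex.I * y, -(a : ℂ)]
        with hUdef
      have hUJs : U ∈ Js := by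
        refine ⟨?_, ?_, ?_⟩
        · rw [Matrix.mem_unitaryGroup_iff]
          ext i j
          fin_cases i <;> fin_cases j <;>
            simp [hUdef, Matrix.mul_apply, Fin.sum_univ_two, Matrix.one_apply,
              Matrix.star_apply, Complex.star_def, map_sub, map_add, _root_.map_mul,
              map_neg, Complex.conj_ofReal, Complex.conj_I] <;>
            (try field_simp) <;> (try ring_nf) <;>
      (try simp only [Complex.I_sq, Complex.I_mul_I, Complex.I_pow_four]) <;> (try ring_nf) <;>
      first
        | ring1
        | linear_combination hC
        | linear_combination -hC
        | linear_combination 2 * hC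
        | linear_combination -2 * hC
        | linear_combination Complex.I * hC
        | linear_combination -Complex.I * hC
        | linear_combination 2 * Complex.I * hC
        | linear_combination -2 * Complex.I * hC
        · rw [Matrix.det_fin_two]
          simp [hUdef, Matrix.sub_apply, Matrix.one_apply]
          (try field_simp) <;> (try ring_nf) <;>
      (try simp only [Complex.I_sq, Complex.I_mul_I, Complex.I_pow_four]) <;> (try ring_nf) <;>
      first
        | ring1
        | linear_combination hC
        | linear_combination -hC
        | linear_combination 2 * hC
        | linear_combination -2 * hC
        | linear_combination Complex.I * hC
        | linear_combination -Complex.I * hC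
        | linear_combination 2 * Complex.I * hC
        | linear_combination -2 * Complex.I * hC
        · rw [Matrix.det_fin_two]
          simp [hUdef, Matrix.add_apply, Matrix.one_apply]
          (try field_simp) <;> (try ring_nf) <;>
      (try simp only [Complex.I_sq, Complex.I_mul_I, Complex.I_pow_four]) <;> (try ring_nf) <;>
      first
        | ring1
        | linear_combination hC
        | linear_combination -hC
        | linear_combination 2 * hC
        | linear_combination -2 * hC
        | linear_combination Complex.I * hC
        | linear_combination -Complex.I * hC
        | linear_combination 2 * Complex.I * hC
        | linear_combination -2 * Complex.I * hC
      refine ⟨U, hUJs, ?_⟩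
      funext i
      fin_cases i <;> simp [ginv, hUdef, ha, hx, hy, hp0]
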